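/- Let r, s be nonzero complex numbers with r^k s^l = 1 only for k = l = 0, and let n be a positive integer. For λ = Σ λ_i ϖ_i in the weight lattice Λ of so_{2n+1} and η, φ ∈ ℤ^n (coordinates in the simple roots), define ϱ^{0,λ}(η, φ) = (r s^{−1})^{(η+φ, λ)} where η, φ are regarded as elements of ℝ^n via η ↦ Σ η_i α_i, and define ϱ^{λ,0}(η, φ) = ϱ^λ(ω'_η ω_φ) via the pairing of type B_n. Set ϱ^{λ,μ} = ϱ^{λ,0} · ϱ^{0,μ}. If u = (η, φ) satisfies ϱ^{λ,μ}(η, φ) = 1 for all λ, μ ∈ Λ, then η = 0 and φ = 0. In particular, taking μ = ϖ_i gives (η + φ, ϖ_i) = 0 hence η_i + φ_i = 0 for all i, and then taking λ = ϖ_i gives (s²r^{−2})^{(α_i, ϖ_i) η_i} = 1 hence η_i = 0 for all i. -/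

import Mathlib

open Finset

/-- Complex power with a rational exponent (principal branch). -/
noncomputable def zq (z : ℂ) (q : ℚ) : ℂ := z ^ (q : ℂ)

/-- `(ε_j, λ)` for `λ = Σ λ_i ϖ_i` in the weight lattice of `so_{2n+1}`
(`ϖ_i = ε_1 + ⋯ + ε_i` for `i < n`, `ϖ_n = (ε_1 + ⋯ + ε_n)/2`; 0-indexed,
rank `n+1`). -/
def epsW {n : ℕ} (lam : Fin (n+1) → ℤ) (j : Fin (n+1)) : ℚ :=
  (∑ i ∈ univ.filter (fun i => j ≤ i ∧ i ≠ Fin.last n), (lam i : ℚ))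
    + (lam (Fin.last n) : ℚ) / 2

/-- The coefficient of `α_j` when the weight `λ` is written in the simple-root
basis: `c_j = Σ_{k ≤ j} (ε_k, λ)`. -/
def alphaCoordW {n : ℕ} (lam : Fin (n+1) → ℤ) (j : Fin (n+1)) : ℚ :=
  ∑ i ∈ univ.filter (· ≤ j), epsW lam i

/-- `(ε_i, ζ)` for `ζ = Σ ζ_j α_j` in the root lattice of `B_{n+1}`. -/
def epsQ {n : ℕ} (ζ : Fin (n+1) → ℤ) (i : Fin (n+1)) : ℤ :=
  ζ i - (if h : 0 < (i : ℕ) then ζ ⟨(i : ℕ) - 1, by omega⟩ else 0)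

/-- The pairing value `⟨ω'_ζ, ω_i⟩` for `ζ` in the root lattice. -/
noncomputable def pgQ (r s : ℂ) {n : ℕ} (ζ : Fin (n+1) → ℤ) (i : Fin (n+1)) : ℂ :=
  if h : (i : ℕ) + 1 < n + 1 then
    r ^ (2 * epsQ ζ i) * s ^ (2 * epsQ ζ ⟨(i : ℕ) + 1, h⟩)
  else
    r ^ (2 * epsQ ζ i) * (r * s) ^ (-(ζ i))

/-- The pairing value `⟨ω'_λ, ω_i⟩` for `λ` in the weight lattice. -/
noncomputable def pgW (r s : ℂ) {n : ℕ} (lam : Fin (n+1) → ℤ) (i : Fin (n+1)) : ℂ :=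
  if i ≠ Fin.last n then
    zq r (2 * epsW lam i) * zq s (2 * epsW lam (i + 1))
  else
    zq r (2 * epsW lam i) * zq (r * s) (-(alphaCoordW lam (Fin.last n)))

/-- `⟨ω'_η, ω_λ⟩` for `η` in the root lattice and `λ` a weight, extended
bimultiplicatively. -/
noncomputable def pairQW (r s : ℂ) {n : ℕ} (η : Fin (n+1) → ℤ)
    (lam : Fin (n+1) → ℤ) : ℂ :=
  ∏ i : Fin (n+1), zq (pgQ r s η i) (alphaCoordW lam i)

/-- `⟨ω'_λ, ω_φ⟩` for `λ` a weight and `φ` in the root lattice. -/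
noncomputable def pairWQ (r s : ℂ) {n : ℕ} (lam : Fin (n+1) → ℤ)
    (φ : Fin (n+1) → ℤ) : ℂ :=
  ∏ i : Fin (n+1), (pgW r s lam i) ^ (φ i)

/-- `ϱ^{λ,0}(ω'_η ω_φ) = ϱ^λ(ω'_η ω_φ) = ⟨ω'_η, ω_λ⟩⁻¹ ⟨ω'_λ, ω_φ⟩`. -/
noncomputable def rhoLam (r s : ℂ) {n : ℕ} (lam η φ : Fin (n+1) → ℤ) : ℂ :=
  (pairQW r s η lam)⁻¹ * pairWQ r s lam φ

/-- The inner product `(η, μ)` of `η = Σ η_i α_i` in the root lattice with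
`μ = Σ μ_i ϖ_i` in the weight lattice: `(α_i, ϖ_i) = (α_i,α_i)/2`. -/
def ipQW {n : ℕ} (η μ : Fin (n+1) → ℤ) : ℚ :=
  ∑ i : Fin (n+1), (η i : ℚ) * (μ i : ℚ) * (if i ≠ Fin.last n then 1 else 1/2)

/-- `ϱ^{λ,μ}(ω'_η ω_φ) = ϱ^λ(ω'_η ω_φ) · (rs⁻¹)^{(η+φ,μ)}`. -/
noncomputable def rhoLM (r s : ℂ) {n : ℕ} (lam μ η φ : Fin (n+1) → ℤ) : ℂ :=
  rhoLam r s lam η φ * zq (r * s⁻¹) (ipQW (η + φ) μ)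

namespace Stmt4Aux



lemma zq_zero (z : ℂ) : zq z 0 = 1 := by simp [zq]

lemma zq_int (z : ℂ) (q : ℚ) (m : ℤ) (h : q = (m : ℚ)) : zq z q = z ^ m := by
  rw [zq, h]
  push_cast
  exact Complex.cpow_intCast z m

lemma zq_ne_zero {z : ℂ} (hz : z ≠ 0) (q : ℚ) : zq z q ≠ 0 := by
  rw [zq]
  intro hc
  rw [Complex.cpow_eq_zero_iff] at hc
  exact hz hc.1

lemma zq_sq {z : ℂ} (hz : z ≠ 0) (q : ℚ) : (zq z q) ^ 2 = zq z (2 * q) := by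
  rw [zq, zq, sq, ← Complex.cpow_add _ _ hz]
  congr 1
  push_cast
  ring

lemma sq_zpow (x : ℂ) (k : ℤ) : (x ^ k) ^ 2 = (x ^ 2) ^ k := by
  rw [← zpow_natCast (x ^ k) 2, ← zpow_mul, mul_comm, zpow_mul, zpow_natCast]

lemma prod_zpow_sum {α : Type*} (x : ℂ) (hx : x ≠ 0) (s : Finset α) (f : α → ℤ) :
    ∏ a ∈ s, x ^ f a = x ^ (∑ a ∈ s, f a) := by
  classical
  induction s using Finset.induction with
  | empty => simp
  | insert _ _ h ih => rw [Finset.prod_insert h, Finset.sum_insert h, ih, ← zpow_add₀ hx]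

def e2' (n J k : ℕ) : ℤ := if J = n then 1 else if k ≤ J then 2 else 0

def c2' (n J k : ℕ) : ℤ := ∑ m ∈ Finset.range (k+1), e2' n J m

def pre' (f : ℕ → ℤ) (k : ℕ) : ℤ := if k = 0 then 0 else f (k-1)

def aQ' (n : ℕ) (f : ℕ → ℤ) (k : ℕ) : ℤ :=
  if k ≠ n then 2 * (f k - pre' f k) else 2 * (f k - pre' f k) - f k

def aW2' (n J k : ℕ) : ℤ :=
  if k ≠ n then 2 * e2' n J k else 2 * e2' n J n - c2' n J n

lemma tele (f c : ℕ → ℤ) (N : ℕ) : ∑ i ∈ Finset.range (N+1), (f i - pre' f i) * c i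
    = ∑ i ∈ Finset.range N, f i * (c i - c (i+1)) + f N * c N := by
  induction N with
  | zero => simp [pre']
  | succ N ih =>
      rw [Finset.sum_range_succ, ih, Finset.sum_range_succ]
      simp only [pre', if_neg (Nat.succ_ne_zero N), Nat.add_sub_cancel]
      ring

lemma keyC (n J : ℕ) (hJ : J ≤ n) (f : ℕ → ℤ)
    (heq : ∑ i ∈ Finset.range (n+1), aW2' n J i * (-(f i))
      = ∑ i ∈ Finset.range (n+1), aQ' n f i * c2' n J i) : f J = 0 := by
  have hc : ∀ i, c2' n J (i+1) = c2' n J i + e2' n J (i+1) := fun i => Finset.sum_range_succ _ _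
  have hL : ∑ i ∈ Finset.range (n+1), aW2' n J i * (-(f i))
      = -2 * (∑ i ∈ Finset.range n, e2' n J i * f i) - 2 * (e2' n J n * f n)
        + c2' n J n * f n := by
    rw [Finset.sum_range_succ]
    have h1 : ∀ i ∈ Finset.range n, aW2' n J i * (-(f i)) = -2 * (e2' n J i * f i) := by
      intro i hi
      rw [Finset.mem_range] at hi
      rw [aW2', if_pos (by omega : i ≠ n)]; ring
    rw [Finset.sum_congr rfl h1, aW2', if_neg (by simp),
      show (∑ i ∈ Finset.range n, -2 * (e2' n J i * f i))
        = -2 * ∑ i ∈ Finset.range n, e2' n J i * f i from (Finset.mul_sum _ _ _).symm]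
    ring
  have hR : ∑ i ∈ Finset.range (n+1), aQ' n f i * c2' n J i
      = -2 * (∑ i ∈ Finset.range n, f i * e2' n J (i+1)) + f n * c2' n J n := by
    have h1 : ∑ i ∈ Finset.range (n+1), aQ' n f i * c2' n J i
        = 2 * (∑ i ∈ Finset.range (n+1), (f i - pre' f i) * c2' n J i) - f n * c2' n J n := by
      rw [Finset.sum_range_succ, Finset.mul_sum, Finset.sum_range_succ]
      have h2 : ∀ i ∈ Finset.range n, aQ' n f i * c2' n J i
          = 2 * ((f i - pre' f i) * c2' n J i) := by
        intro i hi
        rw [Finset.mem_range] at hi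
        rw [aQ', if_pos (by omega : i ≠ n)]; ring
      rw [Finset.sum_congr rfl h2, aQ', if_neg (by simp)]
      ring
    rw [h1, tele]
    have h3 : ∑ i ∈ Finset.range n, f i * (c2' n J i - c2' n J (i+1))
        = -∑ i ∈ Finset.range n, f i * e2' n J (i+1) := by
      rw [← Finset.sum_neg_distrib]
      refine Finset.sum_congr rfl fun i _ => ?_
      rw [hc i]; ring
    rw [h3]; ring
  rw [hL, hR] at heq
  have key : ∑ i ∈ Finset.range (n+1), e2' n J i * f i
      = ∑ i ∈ Finset.range n, f i * e2' n J (i+1) := by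
    rw [Finset.sum_range_succ]
    linarith
  by_cases hJn : J = n
  · subst hJn
    simp [e2'] at key
    rw [Finset.sum_range_succ] at key
    linarith
  · have hJn' : J < n := lt_of_le_of_ne hJ hJn
    simp only [e2', if_neg hJn] at key
    have hext : ∑ i ∈ Finset.range n, f i * (if i + 1 ≤ J then (2:ℤ) else 0)
        = ∑ i ∈ Finset.range (n+1), f i * (if i + 1 ≤ J then (2:ℤ) else 0) := by
      rw [Finset.sum_range_succ, if_neg (by omega), mul_zero, add_zero]
    rw [hext] at key
    have h2 : ∑ i ∈ Finset.range (n+1),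
        ((if i ≤ J then (2:ℤ) else 0) * f i - f i * (if i + 1 ≤ J then (2:ℤ) else 0)) = 0 := by
      rw [Finset.sum_sub_distrib, key, sub_self]
    have h3 : ∀ i ∈ Finset.range (n+1),
        ((if i ≤ J then (2:ℤ) else 0) * f i - f i * (if i + 1 ≤ J then (2:ℤ) else 0))
          = (if i = J then 2 * f i else 0) := by
      intro i _
      split_ifs <;> omega
    rw [Finset.sum_congr rfl h3, Finset.sum_ite_eq' (Finset.range (n+1)) J (fun i => 2 * f i),
      if_pos (Finset.mem_range.mpr (by omega))] at h2
    omega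


def e2c {n : ℕ} (lam : Fin (n+1) → ℤ) (k : Fin (n+1)) : ℤ :=
  2 * (∑ i ∈ univ.filter (fun i => k ≤ i ∧ i ≠ Fin.last n), lam i) + lam (Fin.last n)

lemma e2c_cast {n : ℕ} (lam : Fin (n+1) → ℤ) (k : Fin (n+1)) :
    ((e2c lam k : ℤ) : ℚ) = 2 * epsW lam k := by
  rw [e2c, epsW]
  push_cast
  ring

def C2c {n : ℕ} (lam : Fin (n+1) → ℤ) (i : Fin (n+1)) : ℤ :=
  ∑ k ∈ univ.filter (· ≤ i), e2c lam k

lemma C2c_cast {n : ℕ} (lam : Fin (n+1) → ℤ) (i : Fin (n+1)) :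
    ((C2c lam i : ℤ) : ℚ) = 2 * alphaCoordW lam i := by
  rw [C2c, alphaCoordW, Finset.mul_sum]
  push_cast [e2c_cast]
  rfl

def aQc {n : ℕ} (η : Fin (n+1) → ℤ) (i : Fin (n+1)) : ℤ :=
  if i ≠ Fin.last n then 2 * epsQ η i else 2 * epsQ η i - η i

def bQc {n : ℕ} (η : Fin (n+1) → ℤ) (i : Fin (n+1)) : ℤ :=
  if h : (i : ℕ) + 1 < n + 1 then 2 * epsQ η ⟨(i:ℕ)+1, h⟩ else -(η i)

lemma fin_ne_last_iff {n : ℕ} (i : Fin (n+1)) : i ≠ Fin.last n ↔ (i:ℕ) + 1 < n + 1 := by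
  rw [Ne, Fin.ext_iff, Fin.val_last]
  have := i.isLt
  omega

lemma pgQ_eq {r s : ℂ} (hr : r ≠ 0) {n : ℕ} (η : Fin (n+1) → ℤ) (i : Fin (n+1)) :
    pgQ r s η i = r ^ aQc η i * s ^ bQc η i := by
  rw [pgQ, aQc, bQc]
  by_cases h : (i:ℕ) + 1 < n + 1
  · rw [dif_pos h, dif_pos h, if_pos ((fin_ne_last_iff i).mpr h)]
  · rw [dif_neg h, dif_neg h, if_neg (fun hne => h ((fin_ne_last_iff i).mp hne)),
      mul_zpow, sub_eq_add_neg, zpow_add₀ hr, mul_assoc]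

lemma pgQ_ne_zero {r s : ℂ} (hr : r ≠ 0) (hs : s ≠ 0) {n : ℕ} (η : Fin (n+1) → ℤ)
    (i : Fin (n+1)) : pgQ r s η i ≠ 0 := by
  rw [pgQ_eq hr η i]
  exact mul_ne_zero (zpow_ne_zero _ hr) (zpow_ne_zero _ hs)

lemma pairQW_sq {r s : ℂ} (hr : r ≠ 0) (hs : s ≠ 0) {n : ℕ} (η lam : Fin (n+1) → ℤ) :
    (pairQW r s η lam) ^ 2
      = r ^ (∑ i : Fin (n+1), aQc η i * C2c lam i)
        * s ^ (∑ i : Fin (n+1), bQc η i * C2c lam i) := by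
  have step : ∀ i ∈ (univ : Finset (Fin (n+1))),
      (zq (pgQ r s η i) (alphaCoordW lam i)) ^ 2
        = r ^ (aQc η i * C2c lam i) * s ^ (bQc η i * C2c lam i) := by
    intro i _
    rw [zq_sq (pgQ_ne_zero hr hs η i) _, zq_int _ _ (C2c lam i) (C2c_cast lam i).symm,
      pgQ_eq hr η i, mul_zpow, ← zpow_mul, ← zpow_mul]
  rw [pairQW, ← Finset.prod_pow, Finset.prod_congr rfl step, Finset.prod_mul_distrib,
    prod_zpow_sum r hr, prod_zpow_sum s hs]

def aW2c {n : ℕ} (lam : Fin (n+1) → ℤ) (i : Fin (n+1)) : ℤ :=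
  if i ≠ Fin.last n then 2 * e2c lam i else 2 * e2c lam i - C2c lam (Fin.last n)

def bW2c {n : ℕ} (lam : Fin (n+1) → ℤ) (i : Fin (n+1)) : ℤ :=
  if i ≠ Fin.last n then 2 * e2c lam (i + 1) else - C2c lam (Fin.last n)

lemma pgW_sq {r s : ℂ} (hr : r ≠ 0) (hs : s ≠ 0) {n : ℕ} (lam : Fin (n+1) → ℤ)
    (i : Fin (n+1)) : (pgW r s lam i) ^ 2 = r ^ aW2c lam i * s ^ bW2c lam i := by
  rw [pgW, aW2c, bW2c]
  by_cases h : i ≠ Fin.last n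
  · rw [if_pos h, if_pos h, if_pos h, mul_pow, zq_sq hr, zq_sq hs,
      zq_int _ _ (2 * e2c lam i) (by push_cast [e2c_cast]; ring),
      zq_int _ _ (2 * e2c lam (i + 1)) (by push_cast [e2c_cast]; ring)]
  · rw [if_neg h, if_neg h, if_neg h, mul_pow, zq_sq hr, zq_sq (mul_ne_zero hr hs),
      zq_int _ _ (2 * e2c lam i) (by push_cast [e2c_cast]; ring),
      zq_int _ _ (-(C2c lam (Fin.last n))) (by push_cast [C2c_cast]; ring),
      mul_zpow, sub_eq_add_neg, zpow_add₀ hr, mul_assoc]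

lemma pairWQ_sq {r s : ℂ} (hr : r ≠ 0) (hs : s ≠ 0) {n : ℕ} (lam φ : Fin (n+1) → ℤ) :
    (pairWQ r s lam φ) ^ 2
      = r ^ (∑ i : Fin (n+1), aW2c lam i * φ i)
        * s ^ (∑ i : Fin (n+1), bW2c lam i * φ i) := by
  have step : ∀ i ∈ (univ : Finset (Fin (n+1))),
      ((pgW r s lam i) ^ (φ i)) ^ 2 = r ^ (aW2c lam i * φ i) * s ^ (bW2c lam i * φ i) := by
    intro i _
    rw [sq_zpow, pgW_sq hr hs lam i, mul_zpow, ← zpow_mul, ← zpow_mul]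
  rw [pairWQ, ← Finset.prod_pow, Finset.prod_congr rfl step, Finset.prod_mul_distrib,
    prod_zpow_sum r hr, prod_zpow_sum s hs]

lemma epsW_zero {n : ℕ} (j : Fin (n+1)) : epsW (0 : Fin (n+1) → ℤ) j = 0 := by
  simp [epsW]

lemma alphaCoordW_zero {n : ℕ} (j : Fin (n+1)) : alphaCoordW (0 : Fin (n+1) → ℤ) j = 0 := by
  simp [alphaCoordW, epsW_zero]

lemma pgW_zero {n : ℕ} (r s : ℂ) (i : Fin (n+1)) : pgW r s (0 : Fin (n+1) → ℤ) i = 1 := by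
  rw [pgW]
  split <;> simp [epsW_zero, alphaCoordW_zero, zq_zero]

lemma rhoLam_zero {n : ℕ} (r s : ℂ) (η φ : Fin (n+1) → ℤ) : rhoLam r s 0 η φ = 1 := by
  have h1 : pairQW r s η 0 = 1 := by
    rw [pairQW]
    exact Finset.prod_eq_one fun i _ => by rw [alphaCoordW_zero, zq_zero]
  have h2 : pairWQ r s 0 φ = 1 := by
    rw [pairWQ]
    exact Finset.prod_eq_one fun i _ => by rw [pgW_zero, one_zpow]
  rw [rhoLam, h1, h2, inv_one, one_mul]

lemma ipQW_single {n : ℕ} (ν : Fin (n+1) → ℤ) (j : Fin (n+1)) :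
    ipQW ν (Pi.single j 1) = (ν j : ℚ) * (if j ≠ Fin.last n then 1 else 1/2) := by
  rw [ipQW, Finset.sum_eq_single j]
  · rw [Pi.single_eq_same]; norm_num
  · intro b _ hb
    rw [Pi.single_eq_of_ne hb]
    norm_num
  · intro hj
    exact absurd (mem_univ j) hj

lemma ipQW_zero {n : ℕ} (ν : Fin (n+1) → ℤ) : ipQW ν 0 = 0 := by
  simp [ipQW]

def ext' {n : ℕ} (η : Fin (n+1) → ℤ) (k : ℕ) : ℤ :=
  if h : k < n+1 then η ⟨k, h⟩ else 0

lemma ext'_coe {n : ℕ} (η : Fin (n+1) → ℤ) (i : Fin (n+1)) : ext' η (i : ℕ) = η i := by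
  rw [ext', dif_pos i.isLt]

lemma epsQ_eq {n : ℕ} (η : Fin (n+1) → ℤ) (i : Fin (n+1)) :
    epsQ η i = ext' η (i:ℕ) - pre' (ext' η) (i:ℕ) := by
  rw [epsQ, pre', ext'_coe]
  by_cases h0 : 0 < (i:ℕ)
  · rw [dif_pos h0, if_neg (by omega)]
    congr 1
    rw [ext', dif_pos (show (i:ℕ) - 1 < n + 1 by have := i.isLt; omega)]
  · rw [dif_neg h0, if_pos (by omega)]

lemma aQc_eq {n : ℕ} (η : Fin (n+1) → ℤ) (i : Fin (n+1)) :
    aQc η i = aQ' n (ext' η) (i:ℕ) := by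
  have hv : (i ≠ Fin.last n) ↔ ((i:ℕ) ≠ n) := by
    rw [Ne, Ne, Fin.ext_iff, Fin.val_last]
  rw [aQc, aQ', epsQ_eq, ← ext'_coe η i]
  by_cases hc : i ≠ Fin.last n
  · rw [if_pos hc, if_pos (hv.mp hc)]
  · rw [if_neg hc, if_neg (fun hn => hc (hv.mpr hn))]

lemma e2c_single {n : ℕ} (j k : Fin (n+1)) :
    e2c (Pi.single j 1) k = e2' n (j:ℕ) (k:ℕ) := by
  rw [e2c, e2']
  have hs1 : ∑ i ∈ univ.filter (fun i => k ≤ i ∧ i ≠ Fin.last n), Pi.single j (1:ℤ) i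
      = if (k ≤ j ∧ j ≠ Fin.last n) then 1 else 0 := by
    rw [Finset.sum_congr rfl (fun i _ => Pi.single_apply j 1 i),
      Finset.sum_ite_eq' _ j (fun _ => (1:ℤ))]
    simp [Finset.mem_filter]
  rw [hs1, Pi.single_apply]
  have hjl : (j = Fin.last n) ↔ (j:ℕ) = n := by rw [Fin.ext_iff, Fin.val_last]
  have hlj : (Fin.last n = j) ↔ (n = (j:ℕ)) := by rw [Fin.ext_iff, Fin.val_last]
  have hkj : (k ≤ j) ↔ (k:ℕ) ≤ (j:ℕ) := Fin.le_def
  by_cases hc : (j:ℕ) = n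
  · rw [if_pos hc, if_neg (by simp [hjl, hc]), if_pos (hlj.mpr hc.symm)]
    ring
  · rw [if_neg hc, if_neg (fun he => hc (hlj.mp he).symm)]
    by_cases hk : (k:ℕ) ≤ (j:ℕ)
    · rw [if_pos ⟨hkj.mpr hk, fun he => hc (hjl.mp he)⟩, if_pos hk]
      ring
    · rw [if_neg (fun hand => hk (hkj.mp hand.1)), if_neg hk]
      ring

lemma fin_filter_le_sum {n : ℕ} (i : Fin (n+1)) (g : ℕ → ℤ) :
    ∑ k ∈ univ.filter (· ≤ i), g (k:ℕ) = ∑ m ∈ Finset.range ((i:ℕ)+1), g m := by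
  rw [Finset.sum_filter]
  have h1 : ∀ k : Fin (n+1), (if k ≤ i then g (k:ℕ) else 0)
      = (fun m => if m ≤ (i:ℕ) then g m else 0) (k:ℕ) := by
    intro k
    simp only [Fin.le_def]
  rw [Finset.sum_congr rfl (fun k _ => h1 k),
    Fin.sum_univ_eq_sum_range (fun m => if m ≤ (i:ℕ) then g m else 0) (n+1),
    ← Finset.sum_filter]
  congr 1
  ext x
  simp only [Finset.mem_filter, Finset.mem_range]
  have := i.isLt
  omega

lemma C2c_single {n : ℕ} (j i : Fin (n+1)) :
    C2c (Pi.single j 1) i = c2' n (j:ℕ) (i:ℕ) := by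
  rw [C2c, Finset.sum_congr rfl (fun k _ => e2c_single j k),
    fin_filter_le_sum i (e2' n (j:ℕ))]
  rfl

lemma aW2c_single {n : ℕ} (j i : Fin (n+1)) :
    aW2c (Pi.single j 1) i = aW2' n (j:ℕ) (i:ℕ) := by
  have hv : (i ≠ Fin.last n) ↔ ((i:ℕ) ≠ n) := by
    rw [Ne, Ne, Fin.ext_iff, Fin.val_last]
  rw [aW2c, aW2']
  by_cases hc : i ≠ Fin.last n
  · rw [if_pos hc, if_pos (hv.mp hc), e2c_single]
  · rw [if_neg hc, if_neg (fun hn => hc (hv.mpr hn))]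
    push_neg at hc
    rw [hc, e2c_single, C2c_single, Fin.val_last]

end Stmt4Aux

/-- Lemma 4.1: if `ϱ^{λ,μ}(ω'_η ω_φ) = 1` for all weights `λ, μ`, then
`η = 0` and `φ = 0`. -/
theorem stmt4 (n : ℕ) (r s : ℂ) (hr : r ≠ 0) (hs : s ≠ 0)
    (hrs : ∀ k l : ℤ, r ^ k * s ^ l = 1 → k = 0 ∧ l = 0)
    (η φ : Fin (n+1) → ℤ)
    (h : ∀ lam μ : Fin (n+1) → ℤ, rhoLM r s lam μ η φ = 1) :
    η = 0 ∧ φ = 0 := by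
  classical
  open Stmt4Aux in
  have hzne : r * s⁻¹ ≠ 0 := mul_ne_zero hr (inv_ne_zero hs)
  -- Step A : η j + φ j = 0 for all j
  have hA : ∀ j, η j + φ j = 0 := by
    intro j
    have h0 := h 0 (Pi.single j 1)
    rw [rhoLM, Stmt4Aux.rhoLam_zero, one_mul, Stmt4Aux.ipQW_single] at h0
    set m : ℤ := if j ≠ Fin.last n then 2 * ((η + φ) j) else (η + φ) j with hm
    have h2 : zq (r * s⁻¹)
        (2 * (((((η + φ) j : ℤ)) : ℚ) * (if j ≠ Fin.last n then 1 else 1/2))) = 1 := by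
      rw [← Stmt4Aux.zq_sq hzne, h0, one_pow]
    have hcast : (2 * (((((η + φ) j : ℤ)) : ℚ) * (if j ≠ Fin.last n then 1 else 1/2)))
        = ((m : ℤ) : ℚ) := by
      rw [hm]
      split_ifs with hc
      · push_cast
        ring
      · ring
    rw [Stmt4Aux.zq_int _ _ m hcast] at h2
    have h3 : r ^ m * s ^ (-m) = 1 := by
      rw [← h2, mul_zpow, inv_zpow, ← zpow_neg]
    have h4 := (hrs m (-m) h3).1
    have h5 : (η + φ) j = 0 := by
      rw [hm] at h4
      split_ifs at h4 <;> omega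
    simpa using h5
  have hφ : ∀ j, φ j = -η j := fun j => by have := hA j; omega
  -- Step B : η j = 0 for all j
  have hB : ∀ j : Fin (n+1), η j = 0 := by
    intro j
    have h1 := h (Pi.single j 1) 0
    have hzero : ipQW (η + φ) (0 : Fin (n+1) → ℤ) = 0 := Stmt4Aux.ipQW_zero _
    rw [rhoLM, hzero, Stmt4Aux.zq_zero, mul_one, rhoLam] at h1
    have hq : pairQW r s η (Pi.single j 1) ≠ 0 := by
      rw [pairQW]
      exact Finset.prod_ne_zero_iff.mpr fun i _ =>
        Stmt4Aux.zq_ne_zero (Stmt4Aux.pgQ_ne_zero hr hs η i) _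
    have h2 : pairWQ r s (Pi.single j 1) φ = pairQW r s η (Pi.single j 1) :=
      ((inv_mul_eq_one₀ hq).mp h1).symm
    have h3 : (pairWQ r s (Pi.single j 1) φ) ^ 2 = (pairQW r s η (Pi.single j 1)) ^ 2 := by
      rw [h2]
    rw [Stmt4Aux.pairWQ_sq hr hs, Stmt4Aux.pairQW_sq hr hs] at h3
    set A := ∑ i : Fin (n+1), Stmt4Aux.aW2c (Pi.single j 1) i * φ i with hA'
    set B := ∑ i : Fin (n+1), Stmt4Aux.bW2c (Pi.single j 1) i * φ i with hB'
    set C := ∑ i : Fin (n+1), Stmt4Aux.aQc η i * Stmt4Aux.C2c (Pi.single j 1) i with hC'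
    set D := ∑ i : Fin (n+1), Stmt4Aux.bQc η i * Stmt4Aux.C2c (Pi.single j 1) i with hD'
    have h4 : r ^ (A - C) * s ^ (B - D) = 1 := by
      rw [zpow_sub₀ hr, zpow_sub₀ hs, div_mul_div_comm, h3,
        div_self (mul_ne_zero (zpow_ne_zero _ hr) (zpow_ne_zero _ hs))]
    have h5 : A - C = 0 := (hrs _ _ h4).1
    have hAeq : A = ∑ i ∈ Finset.range (n+1),
        Stmt4Aux.aW2' n (j:ℕ) i * (-(Stmt4Aux.ext' η i)) := by
      rw [hA']
      have hpt : ∀ i : Fin (n+1), Stmt4Aux.aW2c (Pi.single j 1) i * φ i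
          = (fun k => Stmt4Aux.aW2' n (j:ℕ) k * (-(Stmt4Aux.ext' η k))) (i:ℕ) := by
        intro i
        simp only
        rw [Stmt4Aux.aW2c_single, hφ i, Stmt4Aux.ext'_coe]
      rw [Finset.sum_congr rfl fun i _ => hpt i]
      exact Fin.sum_univ_eq_sum_range
        (fun k => Stmt4Aux.aW2' n (j:ℕ) k * (-(Stmt4Aux.ext' η k))) (n+1)
    have hCeq : C = ∑ i ∈ Finset.range (n+1),
        Stmt4Aux.aQ' n (Stmt4Aux.ext' η) i * Stmt4Aux.c2' n (j:ℕ) i := by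
      rw [hC']
      have hpt : ∀ i : Fin (n+1), Stmt4Aux.aQc η i * Stmt4Aux.C2c (Pi.single j 1) i
          = (fun k => Stmt4Aux.aQ' n (Stmt4Aux.ext' η) k * Stmt4Aux.c2' n (j:ℕ) k) (i:ℕ) := by
        intro i
        simp only
        rw [Stmt4Aux.aQc_eq, Stmt4Aux.C2c_single]
      rw [Finset.sum_congr rfl fun i _ => hpt i]
      exact Fin.sum_univ_eq_sum_range
        (fun k => Stmt4Aux.aQ' n (Stmt4Aux.ext' η) k * Stmt4Aux.c2' n (j:ℕ) k) (n+1)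
    have heqN : ∑ i ∈ Finset.range (n+1), Stmt4Aux.aW2' n (j:ℕ) i * (-(Stmt4Aux.ext' η i))
        = ∑ i ∈ Finset.range (n+1),
            Stmt4Aux.aQ' n (Stmt4Aux.ext' η) i * Stmt4Aux.c2' n (j:ℕ) i := by
      rw [← hAeq, ← hCeq]
      omega
    have := Stmt4Aux.keyC n (j:ℕ) (by have := j.isLt; omega) (Stmt4Aux.ext' η) heqN
    rwa [Stmt4Aux.ext'_coe] at this
  refine ⟨funext fun i => hB i, funext fun i => ?_⟩
  rw [hφ i, hB i, neg_zero, Pi.zero_apply]
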